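/- Let k be a real number, x a point of ℝ³, c a complex number, and ε > 0. Suppose there exists M ≥ 0 such that for all z ∈ ℝ³ with 0 < ‖z − x‖ < ε one has ‖exp(i·k·‖z−x‖)/(4π·‖z−x‖) − c · exp(−i·k·‖z−x‖)/(4π·‖z−x‖)‖ ≤ M. Then c = 1. -/

import Mathlib

/-- If `Φ(z,x) - c · conj(Φ(z,x))` is bounded on a punctured ball around `x`, where
`Φ(z,x) = exp(ik‖z-x‖)/(4π‖z-x‖)`, then `c = 1`. -/
theorem coeff_one_of_bounded_diff_fundamental_solution (k : ℝ)
    (x : EuclideanSpace ℝ (Fin 3)) (c : ℂ) (ε : ℝ) (hε : 0 < ε)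
    (h : ∃ M : ℝ, 0 ≤ M ∧ ∀ z : EuclideanSpace ℝ (Fin 3),
      0 < ‖z - x‖ → ‖z - x‖ < ε →
      ‖Complex.exp (Complex.I * (k : ℂ) * (‖z - x‖ : ℂ)) /
          (4 * (Real.pi : ℂ) * (‖z - x‖ : ℂ)) -
        c * (Complex.exp (-Complex.I * (k : ℂ) * (‖z - x‖ : ℂ)) /
          (4 * (Real.pi : ℂ) * (‖z - x‖ : ℂ)))‖ ≤ M) :
    c = 1 := by
  obtain ⟨M, hM0, hM⟩ := h
  by_contra hc
  set d : ℝ := ‖(1 : ℂ) - c‖ with hd_def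
  have hd : 0 < d := by
    rw [hd_def, norm_pos_iff, sub_ne_zero]
    exact fun h' => hc h'.symm
  have hπ : (0:ℝ) < Real.pi := Real.pi_pos
  set A : ℝ := 2 * (|k| + 1) * (1 + ‖c‖) with hA_def
  have hA : 0 < A := by positivity
  set r : ℝ := min (ε/2) (min ((|k|+1)⁻¹) (min (d/(2*A)) (d/(16*Real.pi*(M+1))))) with hr_def
  have hr0 : 0 < r := by
    apply lt_min (by linarith)
    apply lt_min (by positivity)
    exact lt_min (by positivity) (by positivity)
  have hrε : r < ε := lt_of_le_of_lt (min_le_left _ _) (by linarith)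
  have hrk : |k| * r ≤ 1 := by
    have h1 : r ≤ (|k|+1)⁻¹ := le_trans (min_le_right _ _) (min_le_left _ _)
    have hp : (0:ℝ) < |k|+1 := by positivity
    have h2 : (|k|+1) * r ≤ 1 := by
      calc (|k|+1)*r ≤ (|k|+1)*(|k|+1)⁻¹ := by nlinarith
      _ = 1 := mul_inv_cancel₀ hp.ne'
    nlinarith [abs_nonneg k]
  have hrA : A * r ≤ d / 2 := by
    have h1 : r ≤ d/(2*A) := le_trans (min_le_right _ _)
      (le_trans (min_le_right _ _) (min_le_left _ _))
    calc A * r ≤ A * (d/(2*A)) := by nlinarith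
    _ = d/2 := by field_simp
  have hrM : 16*Real.pi*(M+1) * r ≤ d := by
    have h1 : r ≤ d/(16*Real.pi*(M+1)) := le_trans (min_le_right _ _)
      (le_trans (min_le_right _ _) (min_le_right _ _))
    rw [le_div_iff₀ (by positivity)] at h1
    linarith
  set z : EuclideanSpace ℝ (Fin 3) := x + EuclideanSpace.single 0 r with hz_def
  have hzx : ‖z - x‖ = r := by
    rw [hz_def, add_sub_cancel_left, EuclideanSpace.norm_single, Real.norm_eq_abs,
      abs_of_pos hr0]
  have key := hM z (by rw [hzx]; exact hr0) (by rw [hzx]; exact hrε)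
  rw [hzx] at key
  set w : ℂ := Complex.exp (Complex.I * (k : ℂ) * (r : ℂ)) with hw_def
  set v : ℂ := Complex.exp (-Complex.I * (k : ℂ) * (r : ℂ)) with hv_def
  have habs : ‖Complex.I * (k : ℂ) * (r : ℂ)‖ = |k| * r := by
    rw [norm_mul, norm_mul, Complex.norm_I, Complex.norm_real, Complex.norm_real,
      Real.norm_eq_abs, Real.norm_eq_abs, one_mul, abs_of_pos hr0]
  have hw1 : ‖w - 1‖ ≤ 2 * (|k| * r) := by
    have := Complex.norm_exp_sub_one_le (x := Complex.I * (k : ℂ) * (r : ℂ)) (by rw [habs]; exact hrk)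
    rwa [habs] at this
  have hv1 : ‖v - 1‖ ≤ 2 * (|k| * r) := by
    have habs' : ‖-Complex.I * (k : ℂ) * (r : ℂ)‖ = |k| * r := by
      rw [norm_mul, norm_mul, norm_neg, Complex.norm_I, Complex.norm_real,
        Complex.norm_real, Real.norm_eq_abs, Real.norm_eq_abs, one_mul, abs_of_pos hr0]
    have := Complex.norm_exp_sub_one_le (x := -Complex.I * (k : ℂ) * (r : ℂ)) (by rw [habs']; exact hrk)
    rwa [habs'] at this
  -- lower bound ‖w - c*v‖ ≥ d/2
  have hlow : d / 2 ≤ ‖w - c * v‖ := by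
    have htri : d ≤ ‖(1 - c) - (w - c * v)‖ + ‖w - c * v‖ := by
      have h0 : (1 : ℂ) - c = ((1 - c) - (w - c * v)) + (w - c * v) := by ring
      calc d = ‖((1 - c) - (w - c * v)) + (w - c * v)‖ := by rw [hd_def, ← h0]
      _ ≤ _ := norm_add_le _ _
    have hmid : ‖(1 - c) - (w - c * v)‖ ≤ A * r := by
      have heq : (1 - c) - (w - c * v) = -(w - 1) + c * (v - 1) := by ring
      rw [heq]
      calc ‖-(w - 1) + c * (v - 1)‖ ≤ ‖-(w-1)‖ + ‖c * (v - 1)‖ := norm_add_le _ _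
      _ = ‖w - 1‖ + ‖c‖ * ‖v - 1‖ := by rw [norm_neg, norm_mul]
      _ ≤ 2 * (|k| * r) + ‖c‖ * (2 * (|k| * r)) := by
          have := norm_nonneg c
          nlinarith
      _ ≤ A * r := by rw [hA_def]; nlinarith [norm_nonneg c, abs_nonneg k]
    linarith
  -- compute the norm of the expression
  have hD : (4 * (Real.pi : ℂ) * (r : ℂ)) ≠ 0 := by
    simp only [ne_eq, mul_eq_zero, not_or]
    refine ⟨⟨by norm_num, ?_⟩, ?_⟩ <;> simp [Complex.ofReal_ne_zero, hπ.ne', hr0.ne']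
  have hexpr : ‖w / (4 * (Real.pi : ℂ) * (r : ℂ)) -
      c * (v / (4 * (Real.pi : ℂ) * (r : ℂ)))‖ = ‖w - c * v‖ / (4 * Real.pi * r) := by
    rw [mul_div_assoc' c v, ← sub_div, norm_div]
    congr 1
    have : (4 * (Real.pi : ℂ) * (r : ℂ)) = ((4 * Real.pi * r : ℝ) : ℂ) := by push_cast; ring
    rw [this, Complex.norm_real, Real.norm_eq_abs, abs_of_pos (by positivity)]
  rw [hexpr] at key
  have hfinal : M + 1 ≤ ‖w - c * v‖ / (4 * Real.pi * r) := by
    rw [le_div_iff₀ (by positivity)]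
    nlinarith
  linarith
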